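/- Let S and R be finite sets, let N be a real S×R matrix with column space W = range(N), let c̄ ∈ ℝ^S be strictly positive, and let γ ∈ ℝ^S be strictly positive. Then there exists exactly one strictly positive vector ĉ ∈ ℝ^S such that ĉ − γ ∈ W and Nᵀ applied to the vector (log(ĉ_s/c̄_s))_{s∈S} is zero. (Existence and uniqueness of the detailed-balance stationary state in each stoichiometric simplex.) -/

import Mathlib

open Matrix Filter

lemma mem_range_of_forall_dot {S R : Type*} [Fintype S] [Fintype R]
    (N : Matrix S R ℝ) (x : S → ℝ)
    (h : ∀ w : S → ℝ, Nᵀ.mulVec w = 0 → x ⬝ᵥ w = 0) :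
    x ∈ LinearMap.range N.mulVecLin := by
  classical
  set e : EuclideanSpace ℝ S ≃ₗ[ℝ] (S → ℝ) := WithLp.linearEquiv 2 ℝ (S → ℝ) with he
  set W : Submodule ℝ (EuclideanSpace ℝ S) :=
    (LinearMap.range N.mulVecLin).comap (e : EuclideanSpace ℝ S →ₗ[ℝ] (S → ℝ)) with hW
  have hinner : ∀ (u v : EuclideanSpace ℝ S), (inner ℝ u v : ℝ) = (e u) ⬝ᵥ (e v) := by
    intro u v
    simp [PiLp.inner_apply, RCLike.inner_apply, dotProduct, mul_comm]
    rfl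
  have key : ∀ u : EuclideanSpace ℝ S, u ∈ Wᗮ ↔ Nᵀ.mulVec (e u) = 0 := by
    intro u
    rw [Submodule.mem_orthogonal]
    constructor
    · intro hu
      have h2 : ∀ y : R → ℝ, y ⬝ᵥ Nᵀ.mulVec (e u) = 0 := by
        intro y
        have h3 := hu (e.symm (N.mulVec y)) (by
          simp only [hW, Submodule.mem_comap, LinearEquiv.coe_coe,
            LinearEquiv.apply_symm_apply, LinearMap.mem_range]
          exact ⟨y, rfl⟩)
        rw [hinner] at h3
        simp only [LinearEquiv.apply_symm_apply] at h3
        rw [Matrix.dotProduct_mulVec, Matrix.vecMul_transpose]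
        exact h3
      have := h2 (Nᵀ.mulVec (e u))
      rwa [dotProduct_self_eq_zero] at this
    · intro hu v hv
      simp only [hW, Submodule.mem_comap, LinearMap.mem_range] at hv
      obtain ⟨y, hy⟩ := hv
      rw [hinner]
      have : (e v : S → ℝ) = N.mulVec y := by rw [← Matrix.mulVecLin_apply]; exact hy.symm
      rw [this, dotProduct_comm, Matrix.dotProduct_mulVec,
        ← Matrix.mulVec_transpose, hu, zero_dotProduct]
  have hW2 : e.symm x ∈ W := by
    rw [← Submodule.orthogonal_orthogonal W, Submodule.mem_orthogonal]
    intro u hu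
    rw [key] at hu
    rw [hinner]
    simp only [LinearEquiv.apply_symm_apply]
    rw [dotProduct_comm]
    exact h (e u) hu
  simpa only [hW, Submodule.mem_comap, LinearEquiv.coe_coe,
    LinearEquiv.apply_symm_apply] using hW2


lemma uniq_aux {S R : Type*} [Fintype S] [Fintype R]
    (N : Matrix S R ℝ) (cbar : S → ℝ) (hcbar : ∀ s, 0 < cbar s)
    (c1 c2 : S → ℝ) (h1p : ∀ s, 0 < c1 s) (h2p : ∀ s, 0 < c2 s)
    (hd : c1 - c2 ∈ LinearMap.range N.mulVecLin)
    (h1 : Nᵀ.mulVec (fun s => Real.log (c1 s / cbar s)) = 0)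
    (h2 : Nᵀ.mulVec (fun s => Real.log (c2 s / cbar s)) = 0) : c1 = c2 := by
  classical
  obtain ⟨y, hy⟩ := hd
  set u : S → ℝ := fun s => Real.log (c1 s) - Real.log (c2 s) with hu
  have hueq : u = (fun s => Real.log (c1 s / cbar s)) - (fun s => Real.log (c2 s / cbar s)) := by
    funext s
    simp only [hu, Pi.sub_apply]
    rw [Real.log_div (h1p s).ne' (hcbar s).ne', Real.log_div (h2p s).ne' (hcbar s).ne']
    ring
  have hNu : Nᵀ.mulVec u = 0 := by
    rw [hueq, Matrix.mulVec_sub, h1, h2, sub_zero]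
  have hdot : (c1 - c2) ⬝ᵥ u = 0 := by
    have : (c1 - c2) = N.mulVec y := by rw [← Matrix.mulVecLin_apply]; exact hy.symm
    rw [this, dotProduct_comm, Matrix.dotProduct_mulVec,
      ← Matrix.mulVec_transpose, hNu, zero_dotProduct]
  have hnonneg : ∀ s : S, 0 ≤ (c1 s - c2 s) * u s := by
    intro s
    rcases lt_trichotomy (c1 s) (c2 s) with hlt | heq | hgt
    · have : u s < 0 := sub_neg.mpr (Real.log_lt_log (h1p s) hlt)
      nlinarith
    · simp [hu, heq]
    · have : 0 < u s := sub_pos.mpr (Real.log_lt_log (h2p s) hgt)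
      nlinarith
  have hsum : ∑ s, (c1 s - c2 s) * u s = 0 := by
    rw [← hdot]; simp [dotProduct]
  have hzero : ∀ s : S, (c1 s - c2 s) * u s = 0 := by
    intro s
    have := (Finset.sum_eq_zero_iff_of_nonneg (fun s _ => hnonneg s)).mp hsum
    exact this s (Finset.mem_univ s)
  funext s
  by_contra hne
  rcases mul_eq_zero.mp (hzero s) with h | h
  · exact hne (by linarith [sub_eq_zero.mp h])
  · have := Real.log_injOn_pos (Set.mem_Ioi.mpr (h1p s)) (Set.mem_Ioi.mpr (h2p s))
      (sub_eq_zero.mp h)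
    exact hne this

lemma exists_sol {S R : Type*} [Fintype S] [Fintype R] [Nonempty S]
    (N : Matrix S R ℝ) (cbar γ : S → ℝ)
    (hcbar : ∀ s, 0 < cbar s) (hγ : ∀ s, 0 < γ s) :
    ∃ chat : S → ℝ, (∀ s, 0 < chat s) ∧
      chat - γ ∈ LinearMap.range N.mulVecLin ∧
      Nᵀ.mulVec (fun s => Real.log (chat s / cbar s)) = 0 := by
  classical
  set K : Submodule ℝ (S → ℝ) := LinearMap.ker (Nᵀ).mulVecLin with hK
  set f : K → ℝ := fun u => ∑ s, (cbar s * Real.exp (u.val s) - γ s * u.val s) with hf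
  -- continuity
  have hcont : Continuous f := by
    apply continuous_finset_sum
    intro s _
    have hcs : Continuous fun u : K => (u : S → ℝ) s :=
      (continuous_apply s).comp continuous_subtype_val
    exact (continuous_const.mul (Real.continuous_exp.comp hcs)).sub (continuous_const.mul hcs)
  -- constants
  obtain ⟨s₀, -, ha⟩ := Finset.exists_min_image Finset.univ cbar ⟨Classical.arbitrary S, Finset.mem_univ _⟩
  obtain ⟨s₁, -, hb⟩ := Finset.exists_max_image Finset.univ γ ⟨Classical.arbitrary S, Finset.mem_univ _⟩
  obtain ⟨s₂, -, hm⟩ := Finset.exists_min_image Finset.univ γ ⟨Classical.arbitrary S, Finset.mem_univ _⟩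
  set a := cbar s₀ with ha'
  set b := γ s₁ with hb'
  set m := γ s₂ with hm'
  have hapos : 0 < a := hcbar s₀
  have hbpos : 0 < b := hγ s₁
  have hmpos : 0 < m := hγ s₂
  have ha2 : ∀ s, a ≤ cbar s := fun s => ha s (Finset.mem_univ s)
  have hb2 : ∀ s, γ s ≤ b := fun s => hb s (Finset.mem_univ s)
  have hm2 : ∀ s, m ≤ γ s := fun s => hm s (Finset.mem_univ s)
  set L : ℝ := -(b * b) / a with hL
  set ψ : ℝ → ℝ := fun r => min (a / 4 * r ^ 2 - b * r) (m * r) with hψ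
  -- exp lower bound
  have hexp : ∀ x : ℝ, 0 ≤ x → x ^ 2 / 4 ≤ Real.exp x := by
    intro x hx
    have h1 : x / 2 + 1 ≤ Real.exp (x / 2) := Real.add_one_le_exp _
    have h2 : Real.exp x = Real.exp (x / 2) * Real.exp (x / 2) := by
      rw [← Real.exp_add]; ring_nf
    nlinarith [Real.exp_pos (x / 2)]
  -- term lower bounds
  have hq : ∀ (s : S) (x : ℝ), 0 ≤ x → a / 4 * x ^ 2 - b * x ≤ cbar s * Real.exp x - γ s * x := by
    intro s x hx
    have h1 : a / 4 * x ^ 2 ≤ cbar s * Real.exp x := by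
      have := hexp x hx
      nlinarith [Real.exp_pos x, ha2 s]
    have h2 : γ s * x ≤ b * x := by nlinarith [hb2 s]
    linarith
  have hterm_L : ∀ (s : S) (x : ℝ), L ≤ cbar s * Real.exp x - γ s * x := by
    intro s x
    rcases le_or_gt 0 x with hx | hx
    · have h3 : L ≤ a / 4 * x ^ 2 - b * x := by
        rw [hL, div_le_iff₀ hapos]
        nlinarith [sq_nonneg (a * x - 2 * b)]
      linarith [hq s x hx]
    · have h1 : 0 ≤ cbar s * Real.exp x := (mul_pos (hcbar s) (Real.exp_pos x)).le
      have h2 : 0 ≤ -(γ s * x) := by nlinarith [hγ s]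
      have h3 : L ≤ 0 := by
        rw [hL]
        apply div_nonpos_of_nonpos_of_nonneg <;> nlinarith
      linarith
  have hterm_ψ : ∀ (s : S) (x : ℝ), ψ |x| ≤ cbar s * Real.exp x - γ s * x := by
    intro s x
    rcases le_or_gt 0 x with hx | hx
    · rw [abs_of_nonneg hx]
      exact le_trans (min_le_left _ _) (hq s x hx)
    · rw [abs_of_neg hx]
      refine le_trans (min_le_right _ _) ?_
      have h1 : 0 ≤ cbar s * Real.exp x := (mul_pos (hcbar s) (Real.exp_pos x)).le
      have h2 : m * (-x) ≤ γ s * (-x) := by nlinarith [hm2 s]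
      nlinarith
  -- lower bound for f
  set n : ℕ := Fintype.card S with hn
  have hbound : ∀ u : K, ψ ‖u‖ + ((n : ℝ) - 1) * L ≤ f u := by
    intro u
    obtain ⟨s₃, -, hs₃⟩ := Finset.exists_mem_eq_sup Finset.univ
      Finset.univ_nonempty (fun s => ‖(u : S → ℝ) s‖₊)
    have hnorm : ‖u‖ = |(u : S → ℝ) s₃| := by
      rw [show ‖u‖ = ‖(u : S → ℝ)‖ from rfl, Pi.norm_def, hs₃]
      simp [Real.norm_eq_abs]
    have hsingle : (cbar s₃ * Real.exp ((u : S → ℝ) s₃) - γ s₃ * (u : S → ℝ) s₃) - L ≤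
        ∑ s, ((cbar s * Real.exp ((u : S → ℝ) s) - γ s * (u : S → ℝ) s) - L) := by
      apply Finset.single_le_sum (f := fun s => (cbar s * Real.exp ((u : S → ℝ) s) - γ s * (u : S → ℝ) s) - L)
      · intro s _
        have := hterm_L s ((u : S → ℝ) s)
        linarith
      · exact Finset.mem_univ s₃
    have hsum : ∑ s, ((cbar s * Real.exp ((u : S → ℝ) s) - γ s * (u : S → ℝ) s) - L)
        = f u - n * L := by
      rw [Finset.sum_sub_distrib, Finset.sum_const, Finset.card_univ]
      simp [hf, hn, nsmul_eq_mul]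
    have hψ3 : ψ ‖u‖ ≤ cbar s₃ * Real.exp ((u : S → ℝ) s₃) - γ s₃ * (u : S → ℝ) s₃ := by
      rw [hnorm]; exact hterm_ψ s₃ _
    rw [hsum] at hsingle
    linarith
  -- coercivity
  have hψt : Tendsto ψ atTop atTop := by
    have h1 : Tendsto (fun r : ℝ => a / 4 * r ^ 2 - b * r) atTop atTop := by
      have h2 : Tendsto (fun r : ℝ => r * (a / 4 * r - b)) atTop atTop := by
        apply Filter.Tendsto.atTop_mul_atTop₀ tendsto_id
        exact tendsto_atTop_add_const_right _ (-b)
          (Filter.Tendsto.const_mul_atTop (by positivity) tendsto_id)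
      exact h2.congr (fun r => by ring)
    have h3 : Tendsto (fun r : ℝ => m * r) atTop atTop :=
      Filter.Tendsto.const_mul_atTop hmpos tendsto_id
    rw [tendsto_atTop] at h1 h3 ⊢
    intro M
    filter_upwards [h1 M, h3 M] with r hr1 hr3
    exact le_min hr1 hr3
  have hcoer : Tendsto f (cocompact K) atTop := by
    apply tendsto_atTop_mono hbound
    apply tendsto_atTop_add_const_right
    exact hψt.comp tendsto_norm_cocompact_atTop
  obtain ⟨u₀, hu₀⟩ := hcont.exists_forall_le hcoer
  -- stationarity
  set chat : S → ℝ := fun s => cbar s * Real.exp ((u₀ : S → ℝ) s) with hchat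
  have hstat : ∀ w : K, (chat - γ) ⬝ᵥ (w : S → ℝ) = 0 := by
    intro w
    set g : ℝ → ℝ := fun t => ∑ s,
      (cbar s * Real.exp ((u₀ : S → ℝ) s + t * (w : S → ℝ) s)
        - γ s * ((u₀ : S → ℝ) s + t * (w : S → ℝ) s)) with hg
    have hgf : ∀ t, g t = f (u₀ + t • w) := by
      intro t
      have hco : ∀ s, ((u₀ + t • w : K) : S → ℝ) s = (u₀ : S → ℝ) s + t * (w : S → ℝ) s := by
        intro s
        simp
      simp only [hg, hf, hco]
    have hmin : IsLocalMin g 0 := by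
      apply Filter.Eventually.of_forall
      intro t
      rw [hgf t, hgf 0]
      simp only [zero_smul, add_zero]
      exact hu₀ _
    have hderiv : HasDerivAt g
        (∑ s, (cbar s * (Real.exp ((u₀ : S → ℝ) s + 0 * (w : S → ℝ) s) * (w : S → ℝ) s)
          - γ s * (w : S → ℝ) s)) 0 := by
      apply HasDerivAt.fun_sum
      intro s _
      have hlin : HasDerivAt (fun t : ℝ => (u₀ : S → ℝ) s + t * (w : S → ℝ) s)
          ((w : S → ℝ) s) 0 :=
        (hasDerivAt_mul_const ((w : S → ℝ) s)).const_add _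
      exact ((hlin.exp).const_mul (cbar s)).sub (hlin.const_mul (γ s))
    have hD := hmin.hasDerivAt_eq_zero hderiv
    rw [← hD]
    simp only [dotProduct, Pi.sub_apply, hchat]
    apply Finset.sum_congr rfl
    intro s _
    simp only [zero_mul, add_zero]
    ring
  refine ⟨chat, fun s => mul_pos (hcbar s) (Real.exp_pos _), ?_, ?_⟩
  · apply mem_range_of_forall_dot
    intro w hw
    exact hstat ⟨w, by rwa [hK, LinearMap.mem_ker, Matrix.mulVecLin_apply]⟩
  · have hlog : (fun s => Real.log (chat s / cbar s)) = (u₀ : S → ℝ) := by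
      funext s
      simp only [hchat]
      rw [mul_comm (cbar s) (Real.exp _), mul_div_assoc, div_self (hcbar s).ne', mul_one,
        Real.log_exp]
    rw [hlog, ← Matrix.mulVecLin_apply]
    exact u₀.2

open Matrix

/-- **Existence and uniqueness of the detailed-balance stationary state in each
stoichiometric simplex.** Given a stoichiometric matrix `N`, a strictly positive reference
state `c̄`, and a strictly positive `γ`, there is exactly one strictly positive `ĉ` with
`ĉ - γ ∈ range N` and `Nᵀ log(ĉ/c̄) = 0`. -/
theorem stationary_state_exists_unique
    {S R : Type*} [Fintype S] [Fintype R]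
    (N : Matrix S R ℝ) (cbar γ : S → ℝ)
    (hcbar : ∀ s, 0 < cbar s) (hγ : ∀ s, 0 < γ s) :
    ∃! chat : S → ℝ, (∀ s, 0 < chat s) ∧
      chat - γ ∈ LinearMap.range N.mulVecLin ∧
      Nᵀ.mulVec (fun s => Real.log (chat s / cbar s)) = 0 := by
  classical
  obtain hS | hS := isEmpty_or_nonempty S
  · refine ⟨γ, ⟨fun s => hγ s, by rw [sub_self]; exact zero_mem _, ?_⟩,
      fun c _ => funext fun s => hS.elim s⟩
    funext r
    simp [Matrix.mulVec, dotProduct]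
  · obtain ⟨chat, h1, h2, h3⟩ := exists_sol N cbar γ hcbar hγ
    refine ⟨chat, ⟨h1, h2, h3⟩, ?_⟩
    rintro c ⟨hc1, hc2, hc3⟩
    apply uniq_aux N cbar hcbar c chat hc1 h1 ?_ hc3 h3
    have := Submodule.sub_mem _ hc2 h2
    simpa [sub_sub_sub_cancel_right] using this
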